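/- arXiv:2102.10804 — 2 statements merged into one kernel-verified Lean document; each statement's English description precedes it below -/
import Mathlib

section
/- For every positive integer n, 2n·σ(2n+1) = Σ_{j≥1} (5j(j+1) − 2n)·σ(2n+1 − j(j+1)), where the sum is over all integers j ≥ 1 (only finitely many terms are nonzero since σ vanishes on non-positive arguments). -/
/-- Sum of divisors of an integer, with `sigmaZ m = 0` when `m` is not a positive integer. -/
def sigmaZ (m : ℤ) : ℤ := ∑ d ∈ m.toNat.divisors, (d : ℤ)

namespace SigmaRecAux

abbrev T3 := ℤ × ℤ × ℤ

/-- `Mz n = 8n+5`. -/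
def Mz (n : ℕ) : ℤ := 8 * n + 5

/-- Solutions of `k² + 4de = 8n+5` with `k` odd, `d, e ≥ 1`. -/
noncomputable def XX (n : ℕ) : Finset T3 :=
  ((Finset.Icc (-(Mz n)) (Mz n)) ×ˢ (Finset.Icc 1 (Mz n)) ×ˢ (Finset.Icc 1 (Mz n))).filter
    (fun t => t.1 % 2 = 1 ∧ t.1 ^ 2 + 4 * t.2.1 * t.2.2 = Mz n)

def wF (t : T3) : ℤ := (t.1 ^ 2 - t.2.1 * t.2.2) * t.2.1
def FF (t : T3) : ℤ := (t.2.1 + t.2.2) * (t.2.2 + t.1) * (t.2.1 - t.1)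
def GG (t : T3) : ℤ := (t.2.1 + t.2.2) * (t.2.2 - t.1) * (t.2.1 + t.1)
def sS (t : T3) : ℤ := 2 * (t.1 ^ 2 * t.2.2 - t.2.1 * t.2.2 ^ 2)

lemma mem_XX {n : ℕ} {t : T3} :
    t ∈ XX n ↔ t.1 % 2 = 1 ∧ 1 ≤ t.2.1 ∧ 1 ≤ t.2.2 ∧
      t.1 ^ 2 + 4 * t.2.1 * t.2.2 = Mz n := by
  obtain ⟨k, d, e⟩ := t
  simp only [XX, Finset.mem_filter, Finset.mem_product, Finset.mem_Icc]
  constructor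
  · rintro ⟨⟨⟨hk1, hk2⟩, ⟨hd1, hd2⟩, he1, he2⟩, ho, hq⟩
    exact ⟨ho, hd1, he1, hq⟩
  · rintro ⟨ho, hd, he, hq⟩
    have hM : (5 : ℤ) ≤ Mz n := by
      have : (0 : ℤ) ≤ (n : ℤ) := Int.natCast_nonneg n
      simp only [Mz]; linarith
    have hde : (1 : ℤ) ≤ d * e := one_le_mul_of_one_le_of_one_le hd he
    have h1 : d ≤ d * e := by nlinarith
    have h2 : e ≤ d * e := by nlinarith
    refine ⟨⟨⟨?_, ?_⟩, ⟨hd, ?_⟩, he, ?_⟩, ho, hq⟩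
    · nlinarith [sq_nonneg (k + 1)]
    · nlinarith [sq_nonneg (k - 1)]
    · nlinarith [sq_nonneg k]
    · nlinarith [sq_nonneg k]

lemma odd_comps {n : ℕ} {t : T3} (ht : t ∈ XX n) :
    t.2.1 % 2 = 1 ∧ t.2.2 % 2 = 1 := by
  obtain ⟨k, d, e⟩ := t
  obtain ⟨ho, hd, he, hq⟩ := mem_XX.mp ht
  simp only at ho hd he hq ⊢
  obtain ⟨a, ha⟩ : ∃ a : ℤ, k = 2 * a + 1 := ⟨k / 2, by omega⟩
  subst ha
  obtain ⟨b, hb⟩ := Int.even_mul_succ_self a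
  have hde : d * e = 2 * (n : ℤ) + 1 - (b + b) := by
    have h4 : 4 * (d * e) = 4 * (2 * (n : ℤ) + 1 - (a * (a + 1))) := by
      simp only [Mz] at hq; linear_combination hq
    have hab : a * (a + 1) = b + b := hb
    linarith
  have hodd : Odd (d * e) := ⟨(n : ℤ) - b, by linarith⟩
  rw [Int.odd_mul] at hodd
  rw [Int.odd_iff, Int.odd_iff] at hodd
  exact hodd

/-- Shear `α⁻¹ : B → A`, giving `∑_B F = -∑_A G`. -/
lemma sum_B_F (n : ℕ) :
    ∑ t ∈ (XX n).filter (fun t => t.2.1 - t.1 < t.2.2), FF t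
      = ∑ t ∈ (XX n).filter (fun t => t.2.1 + t.1 < t.2.2), (- GG t) := by
  refine Finset.sum_nbij'
    (i := fun t => (t.1 - 2 * t.2.1, t.2.1, t.2.2 + t.1 - t.2.1))
    (j := fun t => (t.1 + 2 * t.2.1, t.2.1, t.2.2 - t.1 - t.2.1)) ?_ ?_ ?_ ?_ ?_
  · rintro ⟨k, d, e⟩ ht
    rw [Finset.mem_filter, mem_XX] at ht
    rw [Finset.mem_filter, mem_XX]
    simp only at ht ⊢
    obtain ⟨⟨ho, hd, he, hq⟩, hp⟩ := ht
    refine ⟨⟨by omega, by omega, by omega, by linear_combination hq⟩, by omega⟩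
  · rintro ⟨k, d, e⟩ ht
    rw [Finset.mem_filter, mem_XX] at ht
    rw [Finset.mem_filter, mem_XX]
    simp only at ht ⊢
    obtain ⟨⟨ho, hd, he, hq⟩, hp⟩ := ht
    refine ⟨⟨by omega, by omega, by omega, by linear_combination hq⟩, by omega⟩
  · rintro ⟨k, d, e⟩ _
    refine Prod.ext ?_ (Prod.ext ?_ ?_) <;> simp <;> ring
  · rintro ⟨k, d, e⟩ _
    refine Prod.ext ?_ (Prod.ext ?_ ?_) <;> simp <;> ring
  · rintro ⟨k, d, e⟩ _
    simp only [FF, GG]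
    ring

/-- Shear `γ : A' → B'`, giving `∑_{A'} F = -∑_{B'} G`. -/
lemma sum_nB_F (n : ℕ) :
    ∑ t ∈ (XX n).filter (fun t => ¬ (t.2.1 - t.1 < t.2.2)), FF t
      = ∑ t ∈ (XX n).filter (fun t => ¬ (t.2.1 + t.1 < t.2.2)), (- GG t) := by
  refine Finset.sum_nbij'
    (i := fun t => (t.1 + 2 * t.2.2, t.2.1 - t.1 - t.2.2, t.2.2))
    (j := fun t => (t.1 - 2 * t.2.2, t.2.1 + t.1 - t.2.2, t.2.2)) ?_ ?_ ?_ ?_ ?_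
  · rintro ⟨k, d, e⟩ ht
    have hde2 := odd_comps (Finset.mem_filter.mp ht).1
    simp only at hde2
    rw [Finset.mem_filter, mem_XX] at ht
    rw [Finset.mem_filter, mem_XX]
    simp only at ht ⊢
    obtain ⟨⟨ho, hd, he, hq⟩, hp⟩ := ht
    refine ⟨⟨by omega, by omega, by omega, by linear_combination hq⟩, by omega⟩
  · rintro ⟨k, d, e⟩ ht
    have hde2 := odd_comps (Finset.mem_filter.mp ht).1
    simp only at hde2
    rw [Finset.mem_filter, mem_XX] at ht
    rw [Finset.mem_filter, mem_XX]
    simp only at ht ⊢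
    obtain ⟨⟨ho, hd, he, hq⟩, hp⟩ := ht
    refine ⟨⟨by omega, by omega, by omega, by linear_combination hq⟩, by omega⟩
  · rintro ⟨k, d, e⟩ _
    refine Prod.ext ?_ (Prod.ext ?_ ?_) <;> simp <;> ring
  · rintro ⟨k, d, e⟩ _
    refine Prod.ext ?_ (Prod.ext ?_ ?_) <;> simp <;> ring
  · rintro ⟨k, d, e⟩ _
    simp only [FF, GG]
    ring

lemma sumF_eq_neg_sumG (n : ℕ) : ∑ t ∈ XX n, FF t = - ∑ t ∈ XX n, GG t := by
  have h1 := sum_B_F n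
  have h2 := sum_nB_F n
  have e1 := Finset.sum_filter_add_sum_filter_not (XX n)
    (fun t : T3 => t.2.1 - t.1 < t.2.2) FF
  have e2 := Finset.sum_filter_add_sum_filter_not (XX n)
    (fun t : T3 => t.2.1 + t.1 < t.2.2) GG
  rw [Finset.sum_neg_distrib] at h1 h2
  linarith

lemma sumG_eq_sumF (n : ℕ) : ∑ t ∈ XX n, GG t = ∑ t ∈ XX n, FF t := by
  refine Finset.sum_nbij'
    (i := fun t : T3 => (-t.1, t.2.1, t.2.2))
    (j := fun t : T3 => (-t.1, t.2.1, t.2.2)) ?_ ?_ ?_ ?_ ?_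
  · rintro ⟨k, d, e⟩ ht
    rw [mem_XX] at ht
    rw [mem_XX]
    simp only at ht ⊢
    obtain ⟨ho, hd, he, hq⟩ := ht
    exact ⟨by omega, hd, he, by linear_combination hq⟩
  · rintro ⟨k, d, e⟩ ht
    rw [mem_XX] at ht
    rw [mem_XX]
    simp only at ht ⊢
    obtain ⟨ho, hd, he, hq⟩ := ht
    exact ⟨by omega, hd, he, by linear_combination hq⟩
  · rintro ⟨k, d, e⟩ _
    refine Prod.ext ?_ (Prod.ext ?_ ?_) <;> simp
  · rintro ⟨k, d, e⟩ _
    refine Prod.ext ?_ (Prod.ext ?_ ?_) <;> simp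
  · rintro ⟨k, d, e⟩ _
    simp only [FF, GG]
    ring

lemma sum_swap_s (n : ℕ) :
    ∑ t ∈ XX n, sS (t.1, t.2.2, t.2.1) = ∑ t ∈ XX n, sS t := by
  refine Finset.sum_nbij'
    (i := fun t : T3 => (t.1, t.2.2, t.2.1))
    (j := fun t : T3 => (t.1, t.2.2, t.2.1)) ?_ ?_ ?_ ?_ ?_
  · rintro ⟨k, d, e⟩ ht
    rw [mem_XX] at ht
    rw [mem_XX]
    simp only at ht ⊢
    obtain ⟨ho, hd, he, hq⟩ := ht
    exact ⟨ho, he, hd, by linear_combination hq⟩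
  · rintro ⟨k, d, e⟩ ht
    rw [mem_XX] at ht
    rw [mem_XX]
    simp only at ht ⊢
    obtain ⟨ho, hd, he, hq⟩ := ht
    exact ⟨ho, he, hd, by linear_combination hq⟩
  · rintro ⟨k, d, e⟩ _
    refine Prod.ext ?_ (Prod.ext ?_ ?_) <;> simp
  · rintro ⟨k, d, e⟩ _
    refine Prod.ext ?_ (Prod.ext ?_ ?_) <;> simp
  · rintro ⟨k, d, e⟩ _
    rfl

lemma sum_w_zero (n : ℕ) : ∑ t ∈ XX n, wF t = 0 := by
  have hF := sumF_eq_neg_sumG n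
  have hG := sumG_eq_sumF n
  have hFzero : ∑ t ∈ XX n, FF t = 0 := by linarith
  have hGzero : ∑ t ∈ XX n, GG t = 0 := by linarith
  have hswap := sum_swap_s n
  have key : ∑ t ∈ XX n, (4 * wF t)
      = ∑ t ∈ XX n, (- FF t - GG t + sS (t.1, t.2.2, t.2.1) - sS t) := by
    refine Finset.sum_congr rfl ?_
    rintro ⟨k, d, e⟩ _
    simp only [wF, FF, GG, sS]
    ring
  have expand : ∑ t ∈ XX n, (- FF t - GG t + sS (t.1, t.2.2, t.2.1) - sS t)
      = - (∑ t ∈ XX n, FF t) - (∑ t ∈ XX n, GG t)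
        + (∑ t ∈ XX n, sS (t.1, t.2.2, t.2.1)) - (∑ t ∈ XX n, sS t) := by
    rw [Finset.sum_sub_distrib, Finset.sum_add_distrib, Finset.sum_sub_distrib,
      Finset.sum_neg_distrib]
  have h4 : ∑ t ∈ XX n, (4 * wF t) = 4 * ∑ t ∈ XX n, wF t := by
    rw [Finset.mul_sum]
  have hfin : 4 * ∑ t ∈ XX n, wF t = 0 := by
    rw [← h4, key, expand, hFzero, hGzero, hswap]; ring
  linarith

/-- Positive part. -/
noncomputable def Xpos (n : ℕ) : Finset T3 := (XX n).filter (fun t => 0 < t.1)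

lemma sum_w_pos_zero (n : ℕ) : ∑ t ∈ Xpos n, wF t = 0 := by
  have hsplit := Finset.sum_filter_add_sum_filter_not (XX n)
    (fun t : T3 => 0 < t.1) wF
  have hneg : ∑ t ∈ (XX n).filter (fun t => ¬ (0 < t.1)), wF t
      = ∑ t ∈ (XX n).filter (fun t => 0 < t.1), wF t := by
    refine Finset.sum_nbij'
      (i := fun t : T3 => (-t.1, t.2.1, t.2.2))
      (j := fun t : T3 => (-t.1, t.2.1, t.2.2)) ?_ ?_ ?_ ?_ ?_
    · rintro ⟨k, d, e⟩ ht
      rw [Finset.mem_filter, mem_XX] at ht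
      rw [Finset.mem_filter, mem_XX]
      simp only at ht ⊢
      obtain ⟨⟨ho, hd, he, hq⟩, hp⟩ := ht
      refine ⟨⟨by omega, hd, he, by linear_combination hq⟩, by omega⟩
    · rintro ⟨k, d, e⟩ ht
      rw [Finset.mem_filter, mem_XX] at ht
      rw [Finset.mem_filter, mem_XX]
      simp only at ht ⊢
      obtain ⟨⟨ho, hd, he, hq⟩, hp⟩ := ht
      refine ⟨⟨by omega, hd, he, by linear_combination hq⟩, by omega⟩
    · rintro ⟨k, d, e⟩ _
      refine Prod.ext ?_ (Prod.ext ?_ ?_) <;> simp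
    · rintro ⟨k, d, e⟩ _
      refine Prod.ext ?_ (Prod.ext ?_ ?_) <;> simp
    · rintro ⟨k, d, e⟩ _
      simp only [wF]
      ring
  have hz := sum_w_zero n
  simp only [Xpos]
  linarith

/-- The fiber of `Xpos` over `j` sums to the `j`-th term of the recurrence. -/
lemma fiber_sum (n : ℕ) (j : ℕ) :
    ∑ t ∈ (Xpos n).filter (fun t => (t.1 - 1).toNat / 2 = j), wF t
      = (5 * (j : ℤ) * ((j : ℤ) + 1) - 2 * (n : ℤ)) *
          sigmaZ (2 * (n : ℤ) + 1 - (j : ℤ) * ((j : ℤ) + 1)) := by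
  set P : ℤ := 2 * (n : ℤ) + 1 - (j : ℤ) * ((j : ℤ) + 1) with hP
  rw [sigmaZ, Finset.mul_sum]
  refine Finset.sum_nbij'
    (i := fun t : T3 => t.2.1.toNat)
    (j := fun d : ℕ => ((2 * (j : ℤ) + 1 : ℤ), ((d : ℤ), ((P.toNat / d : ℕ) : ℤ)))) ?_ ?_ ?_ ?_ ?_
  · rintro ⟨k, d, e⟩ ht
    rw [Finset.mem_filter, Xpos, Finset.mem_filter, mem_XX] at ht
    simp only at ht
    obtain ⟨⟨⟨ho, hd, he, hq⟩, hpos⟩, hfib⟩ := ht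
    have hk : k = 2 * (j : ℤ) + 1 := by omega
    have hde : d * e = P := by
      have h4 : 4 * (d * e) = 4 * P := by
        rw [hP]; simp only [Mz] at hq; rw [hk] at hq; push_cast at hq ⊢; linear_combination hq
      linarith
    have hde1 : (1 : ℤ) ≤ d * e := one_le_mul_of_one_le_of_one_le hd he
    have hcast : (d.toNat : ℤ) = d := Int.toNat_of_nonneg (by omega)
    have hecast : (e.toNat : ℤ) = e := Int.toNat_of_nonneg (by omega)
    have hmul : d.toNat * e.toNat = P.toNat := by
      have hh : ((d.toNat * e.toNat : ℕ) : ℤ) = (P.toNat : ℤ) := by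
        push_cast
        rw [hcast, hecast, hde, Int.toNat_of_nonneg (by omega)]
      exact_mod_cast hh
    rw [Nat.mem_divisors]
    exact ⟨⟨e.toNat, hmul.symm⟩, by omega⟩
  · intro d hd
    rw [Nat.mem_divisors] at hd
    obtain ⟨hdvd, hne⟩ := hd
    have hPpos : (1 : ℤ) ≤ P := by omega
    have hPt : (P.toNat : ℤ) = P := Int.toNat_of_nonneg (by omega)
    have hdpos : 0 < d := Nat.pos_of_mem_divisors (Nat.mem_divisors.mpr ⟨hdvd, hne⟩)
    have hmul : d * (P.toNat / d) = P.toNat := Nat.mul_div_cancel' hdvd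
    have hepos : 0 < P.toNat / d := by
      rcases Nat.eq_zero_or_pos (P.toNat / d) with h | h
      · rw [h, Nat.mul_zero] at hmul; omega
      · exact h
    rw [Finset.mem_filter, Xpos, Finset.mem_filter, mem_XX]
    simp only
    have hq : (2 * (j : ℤ) + 1) ^ 2 + 4 * (d : ℤ) * ((P.toNat / d : ℕ) : ℤ) = Mz n := by
      have hcm : ((d : ℤ)) * ((P.toNat / d : ℕ) : ℤ) = P := by
        rw [← hPt]; exact_mod_cast congrArg (Nat.cast : ℕ → ℤ) hmul
      rw [hP] at hcm
      simp only [Mz]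
      push_cast at hcm ⊢
      linear_combination (4 : ℤ) * hcm
    refine ⟨⟨⟨by omega, by exact_mod_cast hdpos, by exact_mod_cast hepos, hq⟩, by positivity⟩, by omega⟩
  · rintro ⟨k, d, e⟩ ht
    rw [Finset.mem_filter, Xpos, Finset.mem_filter, mem_XX] at ht
    simp only at ht
    obtain ⟨⟨⟨ho, hd, he, hq⟩, hpos⟩, hfib⟩ := ht
    have hk : k = 2 * (j : ℤ) + 1 := by omega
    have hde : d * e = P := by
      have h4 : 4 * (d * e) = 4 * P := by
        rw [hP]; simp only [Mz] at hq; rw [hk] at hq; push_cast at hq ⊢; linear_combination hq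
      linarith
    have hde1 : (1 : ℤ) ≤ d * e := one_le_mul_of_one_le_of_one_le hd he
    have hcast : (d.toNat : ℤ) = d := Int.toNat_of_nonneg (by omega)
    have hecast : (e.toNat : ℤ) = e := Int.toNat_of_nonneg (by omega)
    have hmul : d.toNat * e.toNat = P.toNat := by
      have hh : ((d.toNat * e.toNat : ℕ) : ℤ) = (P.toNat : ℤ) := by
        push_cast
        rw [hcast, hecast, hde, Int.toNat_of_nonneg (by omega)]
      exact_mod_cast hh
    have hdiv : P.toNat / d.toNat = e.toNat := by
      rw [← hmul, Nat.mul_div_cancel_left _ (by omega)]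
    refine Prod.ext ?_ (Prod.ext ?_ ?_) <;> simp only
    · omega
    · exact hcast
    · rw [hdiv]; exact hecast
  · intro d hd
    simp only [Int.toNat_natCast]
  · rintro ⟨k, d, e⟩ ht
    rw [Finset.mem_filter, Xpos, Finset.mem_filter, mem_XX] at ht
    simp only at ht
    obtain ⟨⟨⟨ho, hd, he, hq⟩, hpos⟩, hfib⟩ := ht
    have hk : k = 2 * (j : ℤ) + 1 := by omega
    have hde : d * e = P := by
      have h4 : 4 * (d * e) = 4 * P := by
        rw [hP]; simp only [Mz] at hq; rw [hk] at hq; push_cast at hq ⊢; linear_combination hq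
      linarith
    have hcast : (d.toNat : ℤ) = d := Int.toNat_of_nonneg (by omega)
    simp only [wF, hcast]
    have hgoal : ((k : ℤ) ^ 2 - d * e) * d
        = (5 * (j : ℤ) * ((j : ℤ) + 1) - 2 * (n : ℤ)) * d := by
      rw [hk, hde, hP]; ring
    exact hgoal
  all_goals skip

lemma maps_to_range (n : ℕ) (hn : 0 < n) :
    ∀ t ∈ Xpos n, (t.1 - 1).toNat / 2 ∈ Finset.range (n + 1) := by
  rintro ⟨k, d, e⟩ ht
  rw [Xpos, Finset.mem_filter, mem_XX] at ht
  simp only at ht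
  obtain ⟨⟨ho, hd, he, hq⟩, hpos⟩ := ht
  have hde : (1 : ℤ) ≤ d * e := one_le_mul_of_one_le_of_one_le hd he
  have hk2 : k ^ 2 ≤ 8 * (n : ℤ) + 1 := by
    simp only [Mz] at hq; linarith
  have hn' : (1 : ℤ) ≤ (n : ℤ) := by exact_mod_cast hn
  have hkle : k ≤ 2 * (n : ℤ) + 1 := by
    nlinarith [sq_nonneg (k - 2 * (n : ℤ) - 1), sq_nonneg (k + 2 * (n : ℤ) + 1)]
  rw [Finset.mem_range]
  omega

lemma range_sum_zero (n : ℕ) (hn : 0 < n) :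
    ∑ j ∈ Finset.range (n + 1),
      (5 * (j : ℤ) * ((j : ℤ) + 1) - 2 * (n : ℤ)) *
        sigmaZ (2 * (n : ℤ) + 1 - (j : ℤ) * ((j : ℤ) + 1)) = 0 := by
  have hfib := Finset.sum_fiberwise_of_maps_to (maps_to_range n hn) wF
  have hcongr : ∑ j ∈ Finset.range (n + 1),
      ∑ t ∈ (Xpos n).filter (fun t => (t.1 - 1).toNat / 2 = j), wF t
      = ∑ j ∈ Finset.range (n + 1),
        (5 * (j : ℤ) * ((j : ℤ) + 1) - 2 * (n : ℤ)) *
          sigmaZ (2 * (n : ℤ) + 1 - (j : ℤ) * ((j : ℤ) + 1)) :=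
    Finset.sum_congr rfl (fun j _ => fiber_sum n j)
  rw [← hcongr, hfib, sum_w_pos_zero]

lemma sigmaZ_of_nonpos {m : ℤ} (hm : m ≤ 0) : sigmaZ m = 0 := by
  have h0 : m.toNat = 0 := by omega
  rw [sigmaZ, h0]
  simp

end SigmaRecAux

theorem sigma_recurrence_one (n : ℕ) (hn : 0 < n) :
    2 * (n : ℤ) * sigmaZ (2 * (n : ℤ) + 1) =
      ∑ᶠ j ∈ Set.Ici (1 : ℕ),
        (5 * (j : ℤ) * ((j : ℤ) + 1) - 2 * (n : ℤ)) *
          sigmaZ (2 * (n : ℤ) + 1 - (j : ℤ) * ((j : ℤ) + 1)) := by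
  classical
  set f : ℕ → ℤ := fun j =>
    (5 * (j : ℤ) * ((j : ℤ) + 1) - 2 * (n : ℤ)) *
      sigmaZ (2 * (n : ℤ) + 1 - (j : ℤ) * ((j : ℤ) + 1)) with hf
  have hfzero : ∀ j : ℕ, n + 1 ≤ j → f j = 0 := by
    intro j hj
    have hj' : (n : ℤ) + 1 ≤ (j : ℤ) := by exact_mod_cast hj
    have harg : 2 * (n : ℤ) + 1 - (j : ℤ) * ((j : ℤ) + 1) ≤ 0 := by nlinarith
    rw [hf]
    simp only
    rw [SigmaRecAux.sigmaZ_of_nonpos harg, mul_zero]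
  have hsupp : (Set.Ici (1 : ℕ)) ∩ Function.support f
      = ((Finset.Icc 1 n : Finset ℕ) : Set ℕ) ∩ Function.support f := by
    ext j
    simp only [Set.mem_inter_iff, Set.mem_Ici, Finset.coe_Icc, Set.mem_Icc,
      Function.mem_support]
    constructor
    · rintro ⟨h1, h2⟩
      refine ⟨⟨h1, ?_⟩, h2⟩
      by_contra hgt
      exact h2 (hfzero j (by omega))
    · rintro ⟨⟨h1, _⟩, h2⟩
      exact ⟨h1, h2⟩
  have hfin : ∑ᶠ j ∈ Set.Ici (1 : ℕ), f j = ∑ j ∈ Finset.Icc 1 n, f j :=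
    finsum_mem_eq_sum_of_inter_support_eq f hsupp
  have hkey := SigmaRecAux.range_sum_zero n hn
  have hins : Finset.range (n + 1) = insert 0 (Finset.Icc 1 n) := by
    ext x
    simp only [Finset.mem_range, Finset.mem_insert, Finset.mem_Icc]
    omega
  rw [hins, Finset.sum_insert (by simp)] at hkey
  have hf0 : (5 * ((0 : ℕ) : ℤ) * (((0 : ℕ) : ℤ) + 1) - 2 * (n : ℤ)) *
      sigmaZ (2 * (n : ℤ) + 1 - ((0 : ℕ) : ℤ) * (((0 : ℕ) : ℤ) + 1))
      = -(2 * (n : ℤ) * sigmaZ (2 * (n : ℤ) + 1)) := by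
    norm_num
  show 2 * (n : ℤ) * sigmaZ (2 * (n : ℤ) + 1) = ∑ᶠ j ∈ Set.Ici (1 : ℕ), f j
  rw [hfin]
  have hkey' : f 0 + ∑ j ∈ Finset.Icc 1 n, f j = 0 := hkey
  rw [hf] at hkey'
  simp only at hkey'
  rw [hf0] at hkey'
  linarith
end

section
/- For every positive integer n, n·σ(2n+1) = 4·Σ_{j≥1} (σ(j) − 4σ(j/2))·σ(2n+1 − 2j), where the sum is over all integers j ≥ 1 (only finitely many terms are nonzero), and σ(j/2) is taken to be 0 when j is odd. -/
/-- `sigmaHalf m = sigmaZ (m / 2)` when `m` is even, and `0` when `m` is odd. -/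
def sigmaHalf (m : ℤ) : ℤ := if 2 ∣ m then sigmaZ (m / 2) else 0


def liouA (a b : ℕ) : ℤ :=
  if a = 0 then (if b = 0 then 12 else if b = 1 then 6 else if b = 2 then 4 else 6)
  else if a = 1 then 1
  else if a = 2 then (if b = 1 then -2 else if b = 3 then -2 else 0)
  else 1

def liouB (a b : ℕ) : ℤ :=
  if a = 0 then (if b = 0 then -6 else if b = 1 then -6 else if b = 2 then -4 else -6)
  else if a = 1 then (if b = 1 then -2 else if b = 2 then 2 else if b = 3 then 4 else 0)
  else if a = 2 then (if b = 2 then 2 else if b = 3 then 2 else 0)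
  else (if b = 3 then -2 else 0)

def liouC (a : ℕ) : ℤ := if a = 0 then -12 else if a = 2 then 4 else 0

def FF (a b x y : ℕ) : ℤ := liouA (a % 4) (b % 4) * (x : ℤ) ^ 2 + liouB (a % 4) (b % 4) * ((x : ℤ) * (y : ℤ))

def WW (a b x y : ℕ) : ℤ := liouC (a % 4) * ((x : ℤ) * (y : ℤ))

lemma key_identity (b c x y : ℕ) :
    FF c b x (x + y) + FF b c (x + y) x + WW (b + c) b x y + WW b (b + c) y x
      = FF (b + c) b x y + FF b (b + c) y x := by
  have hb : b % 4 = 0 ∨ b % 4 = 1 ∨ b % 4 = 2 ∨ b % 4 = 3 := by omega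
  have hc : c % 4 = 0 ∨ c % 4 = 1 ∨ c % 4 = 2 ∨ c % 4 = 3 := by omega
  rcases hb with hb | hb | hb | hb <;> rcases hc with hc | hc | hc | hc <;>
    · have hbc : (b + c) % 4 = (b % 4 + c % 4) % 4 := by omega
      rw [hb, hc] at hbc
      norm_num at hbc
      simp only [FF, WW, hb, hc, hbc, liouA, liouB, liouC]
      norm_num
      push_cast
      ring

def SS (N : ℕ) : Finset ((ℕ × ℕ) × ℕ × ℕ) :=
  ((Finset.Icc 1 N ×ˢ Finset.Icc 1 N) ×ˢ Finset.Icc 1 N ×ˢ Finset.Icc 1 N).filter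
    fun p => p.1.1 * p.2.1 + p.1.2 * p.2.2 = N

lemma mem_SS {N : ℕ} {p : (ℕ × ℕ) × ℕ × ℕ} :
    p ∈ SS N ↔ 1 ≤ p.1.1 ∧ 1 ≤ p.1.2 ∧ 1 ≤ p.2.1 ∧ 1 ≤ p.2.2 ∧
      p.1.1 * p.2.1 + p.1.2 * p.2.2 = N := by
  obtain ⟨⟨a, b⟩, x, y⟩ := p
  simp only [SS, Finset.mem_filter, Finset.mem_product, Finset.mem_Icc]
  constructor
  · rintro ⟨⟨⟨⟨ha, -⟩, hb, -⟩, ⟨hx, -⟩, hy, -⟩, he⟩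
    exact ⟨ha, hb, hx, hy, he⟩
  · rintro ⟨ha, hb, hx, hy, he⟩
    have h1 : a ≤ a * x := Nat.le_mul_of_pos_right a hx
    have h2 : b ≤ b * y := Nat.le_mul_of_pos_right b hy
    have h3 : x ≤ a * x := Nat.le_mul_of_pos_left x ha
    have h4 : y ≤ b * y := Nat.le_mul_of_pos_left y hb
    refine ⟨⟨⟨⟨ha, ?_⟩, hb, ?_⟩, ⟨hx, ?_⟩, hy, ?_⟩, he⟩ <;> omega

/-- swap involution -/
def JJ (p : (ℕ × ℕ) × ℕ × ℕ) : (ℕ × ℕ) × ℕ × ℕ := ((p.1.2, p.1.1), p.2.2, p.2.1)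

lemma sum_swap_lt (N : ℕ) (φ : (ℕ × ℕ) × ℕ × ℕ → ℤ)
    (q r : (ℕ × ℕ) × ℕ × ℕ → Prop) [DecidablePred q] [DecidablePred r]
    (hqr : ∀ p, q p ↔ r (JJ p)) :
    ∑ p ∈ (SS N).filter q, φ (JJ p) = ∑ p ∈ (SS N).filter r, φ p := by
  apply Finset.sum_nbij' (i := JJ) (j := JJ)
  · rintro ⟨⟨a, b⟩, x, y⟩ hp
    simp only [Finset.mem_filter, mem_SS] at hp ⊢
    refine ⟨?_, ?_⟩
    · simp only [JJ]; obtain ⟨⟨h1, h2, h3, h4, h5⟩, -⟩ := hp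
      exact ⟨h2, h1, h4, h3, by omega⟩
    · exact (hqr _).mp hp.2
  · rintro ⟨⟨a, b⟩, x, y⟩ hp
    simp only [Finset.mem_filter, mem_SS] at hp ⊢
    refine ⟨?_, ?_⟩
    · simp only [JJ]; obtain ⟨⟨h1, h2, h3, h4, h5⟩, -⟩ := hp
      exact ⟨h2, h1, h4, h3, by omega⟩
    · rw [hqr]; simpa [JJ] using hp.2
  · intro p _; simp [JJ]
  · intro p _; simp [JJ]
  · intro p _; rfl

/-- split the sum into the part with b < a (paired with its swap) and the diagonal a = b -/
lemma split_ab (N : ℕ) (φ : (ℕ × ℕ) × ℕ × ℕ → ℤ) :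
    ∑ p ∈ SS N, φ p
      = ∑ p ∈ (SS N).filter (fun p => p.1.2 < p.1.1), (φ p + φ (JJ p))
        + ∑ p ∈ (SS N).filter (fun p => p.1.1 = p.1.2), φ p := by
  rw [Finset.sum_add_distrib]
  rw [sum_swap_lt N φ (fun p => p.1.2 < p.1.1) (fun p => p.1.1 < p.1.2) (by intro p; simp [JJ])]
  rw [← Finset.sum_filter_add_sum_filter_not (SS N) (fun p => p.1.2 < p.1.1) φ]
  have : (SS N).filter (fun p => ¬ p.1.2 < p.1.1)
      = ((SS N).filter (fun p => p.1.1 < p.1.2)) ∪ ((SS N).filter (fun p => p.1.1 = p.1.2)) := by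
    rw [← Finset.filter_or]
    apply Finset.filter_congr
    intro p _
    constructor
    · intro h; omega
    · intro h; omega
  rw [this, Finset.sum_union]
  · ring
  · rw [Finset.disjoint_left]
    intro p hp hq
    simp only [Finset.mem_filter] at hp hq
    omega

/-- split the sum into the part with x < y (paired with its swap) and the diagonal x = y -/
lemma split_xy (N : ℕ) (φ : (ℕ × ℕ) × ℕ × ℕ → ℤ) :
    ∑ p ∈ SS N, φ p
      = ∑ p ∈ (SS N).filter (fun p => p.2.1 < p.2.2), (φ p + φ (JJ p))
        + ∑ p ∈ (SS N).filter (fun p => p.2.2 = p.2.1), φ p := by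
  rw [Finset.sum_add_distrib]
  rw [sum_swap_lt N φ (fun p => p.2.1 < p.2.2) (fun p => p.2.2 < p.2.1) (by intro p; simp [JJ])]
  rw [← Finset.sum_filter_add_sum_filter_not (SS N) (fun p => p.2.1 < p.2.2) φ]
  have : (SS N).filter (fun p => ¬ p.2.1 < p.2.2)
      = ((SS N).filter (fun p => p.2.2 < p.2.1)) ∪ ((SS N).filter (fun p => p.2.2 = p.2.1)) := by
    rw [← Finset.filter_or]
    apply Finset.filter_congr
    intro p _
    constructor
    · intro h; omega
    · intro h; omega
  rw [this, Finset.sum_union]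
  · ring
  · rw [Finset.disjoint_left]
    intro p hp hq
    simp only [Finset.mem_filter] at hp hq
    omega

/-- the Liouville map -/
def TT (p : (ℕ × ℕ) × ℕ × ℕ) : (ℕ × ℕ) × ℕ × ℕ :=
  ((p.1.1 - p.1.2, p.1.2), p.2.1, p.2.1 + p.2.2)

def TTinv (p : (ℕ × ℕ) × ℕ × ℕ) : (ℕ × ℕ) × ℕ × ℕ :=
  ((p.1.1 + p.1.2, p.1.2), p.2.1, p.2.2 - p.2.1)

lemma sum_TT (N : ℕ) (φ : (ℕ × ℕ) × ℕ × ℕ → ℤ) :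
    ∑ p ∈ (SS N).filter (fun p => p.2.1 < p.2.2), φ p
      = ∑ p ∈ (SS N).filter (fun p => p.1.2 < p.1.1), φ (TT p) := by
  apply Finset.sum_nbij' (i := TTinv) (j := TT)
  · rintro ⟨⟨a, b⟩, x, y⟩ hp
    simp only [Finset.mem_filter, mem_SS, TTinv] at hp ⊢
    obtain ⟨⟨h1, h2, h3, h4, h5⟩, h6⟩ := hp
    have e1 : (a + b) * x + b * (y - x) = a * x + b * y := by
      have : b * (y - x) + b * x = b * y := by
        rw [← Nat.mul_add]; congr 1; omega
      have e2 : (a + b) * x = a * x + b * x := by ring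
      omega
    refine ⟨⟨by omega, h2, h3, by omega, by omega⟩, by omega⟩
  · rintro ⟨⟨a, b⟩, x, y⟩ hp
    simp only [Finset.mem_filter, mem_SS, TT] at hp ⊢
    obtain ⟨⟨h1, h2, h3, h4, h5⟩, h6⟩ := hp
    have e1 : (a - b) * x + b * (x + y) = a * x + b * y := by
      have : (a - b) * x + b * x = a * x := by
        rw [← Nat.add_mul]; congr 1; omega
      have e2 : b * (x + y) = b * x + b * y := by ring
      omega
    have h3N : x ≤ a * x := Nat.le_mul_of_pos_left x h1
    have h4N : y ≤ b * y := Nat.le_mul_of_pos_left y h2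
    refine ⟨⟨by omega, h2, h3, by omega, by omega⟩, by omega⟩
  · rintro ⟨⟨a, b⟩, x, y⟩ hp
    simp only [Finset.mem_filter, mem_SS] at hp
    simp only [TT, TTinv, Prod.mk.injEq]
    exact ⟨⟨by omega, trivial⟩, trivial, by omega⟩
  · rintro ⟨⟨a, b⟩, x, y⟩ hp
    simp only [Finset.mem_filter, mem_SS] at hp
    simp only [TT, TTinv, Prod.mk.injEq]
    exact ⟨⟨by omega, trivial⟩, trivial, by omega⟩
  · rintro ⟨⟨a, b⟩, x, y⟩ hp
    simp only [Finset.mem_filter, mem_SS] at hp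
    have : TT (TTinv ((a, b), x, y)) = ((a, b), x, y) := by
      simp only [TT, TTinv, Prod.mk.injEq]
      exact ⟨⟨by omega, trivial⟩, trivial, by omega⟩
    rw [this]

lemma diag_ab_W_zero (N : ℕ) (hN : N % 2 = 1) :
    ∑ p ∈ (SS N).filter (fun p => p.1.1 = p.1.2), WW p.1.1 p.1.2 p.2.1 p.2.2 = 0 := by
  apply Finset.sum_eq_zero
  rintro ⟨⟨a, b⟩, x, y⟩ hp
  simp only [Finset.mem_filter, mem_SS] at hp
  obtain ⟨⟨h1, h2, h3, h4, h5⟩, h6⟩ := hp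
  subst h6
  have ha : a % 2 = 1 := by
    rcases Nat.even_or_odd a with ⟨t, rfl⟩ | h
    · exfalso
      have e1 : (t + t) * x = t * x + t * x := by ring
      have e3 : (t + t) * y = t * y + t * y := by ring
      omega
    · obtain ⟨t, ht⟩ := h; omega
  have : a % 4 = 1 ∨ a % 4 = 3 := by omega
  rcases this with h | h <;> simp [WW, liouC, h]

lemma master (N : ℕ) (hN : N % 2 = 1) :
    ∑ p ∈ SS N, WW p.1.1 p.1.2 p.2.1 p.2.2
      = ∑ p ∈ (SS N).filter (fun p => p.2.2 = p.2.1), FF p.1.1 p.1.2 p.2.1 p.2.2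
        - ∑ p ∈ (SS N).filter (fun p => p.1.1 = p.1.2), FF p.1.1 p.1.2 p.2.1 p.2.2 := by
  set Fφ : (ℕ × ℕ) × ℕ × ℕ → ℤ := fun p => FF p.1.1 p.1.2 p.2.1 p.2.2 with hFφ
  set Wφ : (ℕ × ℕ) × ℕ × ℕ → ℤ := fun p => WW p.1.1 p.1.2 p.2.1 p.2.2 with hWφ
  have h1 := split_ab N Fφ
  have h2 := split_xy N Fφ
  have h3 := sum_TT N (fun p => Fφ p + Fφ (JJ p))
  have h4 : ∑ p ∈ (SS N).filter (fun p => p.1.2 < p.1.1), (Fφ (TT p) + Fφ (JJ (TT p)))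
      = ∑ p ∈ (SS N).filter (fun p => p.1.2 < p.1.1),
          ((Fφ p + Fφ (JJ p)) - (Wφ p + Wφ (JJ p))) := by
    apply Finset.sum_congr rfl
    rintro ⟨⟨a, b⟩, x, y⟩ hp
    simp only [Finset.mem_filter, mem_SS] at hp
    obtain ⟨⟨ha, hb, hx, hy, he⟩, hlt⟩ := hp
    have hab : a = b + (a - b) := by omega
    have hk := key_identity b (a - b) x y
    simp only [Fφ, Wφ, TT, JJ]
    rw [hab] at *
    simp only [Nat.add_sub_cancel_left] at *
    linarith [hk]
  have h5 := split_ab N Wφ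
  have h6 := diag_ab_W_zero N hN
  have e1 : ∑ p ∈ (SS N).filter (fun p => p.2.1 < p.2.2), (Fφ p + Fφ (JJ p))
      = ∑ p ∈ (SS N).filter (fun p => p.1.2 < p.1.1), (Fφ p + Fφ (JJ p))
        - ∑ p ∈ (SS N).filter (fun p => p.1.2 < p.1.1), (Wφ p + Wφ (JJ p)) := by
    rw [h3, h4, Finset.sum_sub_distrib]
  have : ∑ p ∈ (SS N).filter (fun p => p.1.2 < p.1.1), (Wφ p + Wφ (JJ p))
      = ∑ p ∈ (SS N).filter (fun p => p.2.2 = p.2.1), Fφ p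
        - ∑ p ∈ (SS N).filter (fun p => p.1.1 = p.1.2), Fφ p := by
    linarith [h1, h2, e1]
  linarith [h5, h6, this]
lemma sum_Icc_gauss (m : ℕ) : 2 * ∑ x ∈ Finset.Icc 1 m, (x : ℤ) = m * (m + 1) := by
  induction m with
  | zero => simp
  | succ m ih =>
    rw [Finset.sum_Icc_succ_top (by omega : 1 ≤ m + 1)]
    push_cast
    push_cast at ih
    linarith

lemma sum_quad (m : ℕ) :
    2 * ∑ x ∈ Finset.Icc 1 m, (3 * (x : ℤ) ^ 2 - 2 * ((m : ℤ) + 1) * x) = -((m : ℤ) * (m + 1)) := by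
  induction m with
  | zero => simp
  | succ m ih =>
    rw [Finset.sum_Icc_succ_top (by omega : 1 ≤ m + 1)]
    have e : ∑ x ∈ Finset.Icc 1 m, (3 * (x : ℤ) ^ 2 - 2 * (((m : ℕ) + 1 : ℤ) + 1) * x)
        = (∑ x ∈ Finset.Icc 1 m, (3 * (x : ℤ) ^ 2 - 2 * ((m : ℤ) + 1) * x))
          - ∑ x ∈ Finset.Icc 1 m, 2 * (x : ℤ) := by
      rw [← Finset.sum_sub_distrib]
      apply Finset.sum_congr rfl
      intro x _
      push_cast
      ring
    have g := sum_Icc_gauss m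
    push_cast
    push_cast at e
    rw [e]
    push_cast at ih
    have g2 : ∑ x ∈ Finset.Icc 1 m, 2 * (x : ℤ) = 2 * ∑ x ∈ Finset.Icc 1 m, (x : ℤ) := by
      rw [Finset.mul_sum]
    rw [g2]
    linear_combination ih - 2 * g

lemma diag2_inner (d e : ℕ) (hd : d % 2 = 1) (he : e % 2 = 1) :
    ∑ x ∈ Finset.Icc 1 (e - 1), FF d d x (e - x) = -((e : ℤ) * (((e - 1) / 2 : ℕ) : ℤ)) := by
  have hd4 : d % 4 = 1 ∨ d % 4 = 3 := by omega
  have hA : liouA (d % 4) (d % 4) = 1 := by rcases hd4 with h | h <;> simp [liouA, h]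
  have hB : liouB (d % 4) (d % 4) = -2 := by rcases hd4 with h | h <;> simp [liouB, h]
  have e1 : ∑ x ∈ Finset.Icc 1 (e - 1), FF d d x (e - x)
      = ∑ x ∈ Finset.Icc 1 (e - 1), (3 * (x : ℤ) ^ 2 - 2 * (((e - 1 : ℕ) : ℤ) + 1) * x) := by
    apply Finset.sum_congr rfl
    intro x hx
    simp only [Finset.mem_Icc] at hx
    have hxe : x ≤ e := by omega
    have hc : ((e - x : ℕ) : ℤ) = (e : ℤ) - (x : ℤ) := by
      have := Nat.cast_sub hxe (R := ℤ); exact this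
    have hc2 : ((e - 1 : ℕ) : ℤ) = (e : ℤ) - 1 := by
      have := Nat.cast_sub (by omega : 1 ≤ e) (R := ℤ); simpa using this
    rw [FF, hA, hB, hc, hc2]
    ring
  rw [e1]
  have h2 := sum_quad (e - 1)
  have hc2 : ((e - 1 : ℕ) : ℤ) = (e : ℤ) - 1 := by
    have := Nat.cast_sub (by omega : 1 ≤ e) (R := ℤ); simpa using this
  have hhalf : (2 : ℤ) * (((e - 1) / 2 : ℕ) : ℤ) = (e : ℤ) - 1 := by
    have : 2 * ((e - 1) / 2) = e - 1 := by omega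
    have := congrArg (fun t : ℕ => (t : ℤ)) this
    push_cast at this
    omega
  rw [hc2] at h2
  rw [hc2]
  have final2 : 2 * ∑ x ∈ Finset.Icc 1 (e - 1), (3 * (x : ℤ) ^ 2 - 2 * ((e : ℤ) - 1 + 1) * x)
      = 2 * (-((e : ℤ) * (((e - 1) / 2 : ℕ) : ℤ))) := by
    linear_combination h2 + (e : ℤ) * hhalf
  linarith

lemma diag1_pair (d a e : ℕ) (he : e % 2 = 1) (h1 : 1 ≤ a) (h2 : a ≤ e - 1) :
    FF a (e - a) d d + FF (e - a) a d d = (d : ℤ) ^ 2 := by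
  have ha4 : a % 4 = 0 ∨ a % 4 = 1 ∨ a % 4 = 2 ∨ a % 4 = 3 := by omega
  have he4 : e % 4 = 1 ∨ e % 4 = 3 := by omega
  have hr : (e - a) % 4 = (e % 4 + 4 - a % 4) % 4 := by omega
  rcases ha4 with ha | ha | ha | ha <;> rcases he4 with hee | hee <;>
    · rw [ha, hee] at hr
      norm_num at hr
      simp only [FF, liouA, liouB, ha, hr]
      norm_num
      try ring

lemma diag1_inner (d e : ℕ) (hd : d % 2 = 1) (he : e % 2 = 1) :
    ∑ a ∈ Finset.Icc 1 (e - 1), FF a (e - a) d d = (d : ℤ) ^ 2 * (((e - 1) / 2 : ℕ) : ℤ) := by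
  have hrev : ∑ a ∈ Finset.Icc 1 (e - 1), FF a (e - a) d d
      = ∑ a ∈ Finset.Icc 1 (e - 1), FF (e - a) a d d := by
    apply Finset.sum_nbij' (i := fun a => e - a) (j := fun a => e - a)
    · intro a ha; simp only [Finset.mem_Icc] at ha ⊢; omega
    · intro a ha; simp only [Finset.mem_Icc] at ha ⊢; omega
    · intro a ha; simp only [Finset.mem_Icc] at ha; omega
    · intro a ha; simp only [Finset.mem_Icc] at ha; omega
    · intro a ha
      simp only [Finset.mem_Icc] at ha
      have h : e - (e - a) = a := by omega
      rw [h]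
  have h2S : 2 * ∑ a ∈ Finset.Icc 1 (e - 1), FF a (e - a) d d
      = ∑ a ∈ Finset.Icc 1 (e - 1), (FF a (e - a) d d + FF (e - a) a d d) := by
    rw [Finset.sum_add_distrib, ← hrev]; ring
  have h3 : ∑ a ∈ Finset.Icc 1 (e - 1), (FF a (e - a) d d + FF (e - a) a d d)
      = (e - 1 : ℕ) * (d : ℤ) ^ 2 := by
    rw [Finset.sum_congr rfl (fun a ha => by
      simp only [Finset.mem_Icc] at ha
      exact diag1_pair d a e he ha.1 ha.2)]
    rw [Finset.sum_const, Nat.card_Icc]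
    simp [nsmul_eq_mul]
  have hhalf : (2 : ℤ) * (((e - 1) / 2 : ℕ) : ℤ) = ((e - 1 : ℕ) : ℤ) := by
    have : 2 * ((e - 1) / 2) = e - 1 := by omega
    exact_mod_cast congrArg (fun t : ℕ => (t : ℤ)) this
  have final2 : 2 * ∑ a ∈ Finset.Icc 1 (e - 1), FF a (e - a) d d
      = 2 * ((d : ℤ) ^ 2 * (((e - 1) / 2 : ℕ) : ℤ)) := by
    rw [h2S, h3]
    linear_combination (-(d : ℤ)^2) * hhalf
  linarith

lemma mem_SS' {N a b x y : ℕ} (ha : 1 ≤ a) (hb : 1 ≤ b) (hx : 1 ≤ x) (hy : 1 ≤ y)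
    (he : a * x + b * y = N) : ((a, b), x, y) ∈ SS N :=
  mem_SS.mpr ⟨ha, hb, hx, hy, he⟩

lemma mem_SS_elim {N a b x y : ℕ} (h : ((a, b), x, y) ∈ SS N) :
    1 ≤ a ∧ 1 ≤ b ∧ 1 ≤ x ∧ 1 ≤ y ∧ a * x + b * y = N := mem_SS.mp h

lemma odd_divisor {N d : ℕ} (hN : N % 2 = 1) (hd : d ∣ N) : d % 2 = 1 := by
  rcases Nat.even_or_odd d with ⟨t, rfl⟩ | h
  · exfalso
    obtain ⟨k, hk⟩ := hd
    have : (t + t) * k = t * k + t * k := by ring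
    omega
  · obtain ⟨t, ht⟩ := h; omega

lemma diag_xy_eq (N : ℕ) (hN : 0 < N) :
    ∑ p ∈ (SS N).filter (fun p => p.2.2 = p.2.1), FF p.1.1 p.1.2 p.2.1 p.2.2
      = ∑ q ∈ N.divisors.sigma (fun d => Finset.Icc 1 (N / d - 1)),
          FF q.2 (N / q.1 - q.2) q.1 q.1 := by
  apply Finset.sum_nbij' (i := fun p => ⟨p.2.1, p.1.1⟩)
    (j := fun q => ((q.2, N / q.1 - q.2), q.1, q.1))
  · rintro ⟨⟨a, b⟩, x, y⟩ hp
    obtain ⟨hp, hyx⟩ := Finset.mem_filter.mp hp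
    obtain ⟨ha, hb, hx, hy, he⟩ := mem_SS_elim hp
    replace hyx : y = x := hyx
    have h2 : b * y = b * x := by rw [hyx]
    have hsum : (a + b) * x = N := by
      have h1 : (a + b) * x = a * x + b * x := by ring
      omega
    have hdvd : x ∣ N := Dvd.intro_left _ hsum
    have hdiv : N / x = a + b := Nat.div_eq_of_eq_mul_left hx hsum.symm
    show (⟨x, a⟩ : (d : ℕ) × ℕ) ∈ N.divisors.sigma (fun d => Finset.Icc 1 (N / d - 1))
    simp only [Finset.mem_sigma, Nat.mem_divisors, Finset.mem_Icc]
    exact ⟨⟨hdvd, by omega⟩, ha, by omega⟩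
  · rintro ⟨d, a⟩ hq
    simp only [Finset.mem_sigma, Nat.mem_divisors, Finset.mem_Icc] at hq
    obtain ⟨⟨hdvd, hN0⟩, ha1, ha2⟩ := hq
    have hd1 : 1 ≤ d := by
      rcases Nat.eq_zero_or_pos d with h | h
      · exfalso; subst h; simp at hdvd; omega
      · exact h
    have hed : N / d * d = N := Nat.div_mul_cancel hdvd
    have he2 : 2 ≤ N / d := by omega
    have hsub : (N / d - a) * d = N / d * d - a * d := by rw [Nat.sub_mul]
    have hle : a * d ≤ N / d * d := Nat.mul_le_mul_right d (by omega)
    have hdN : d ≤ N := Nat.le_of_dvd hN hdvd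
    have heN : N / d ≤ N := Nat.div_le_self N d
    show ((a, N / d - a), d, d) ∈ (SS N).filter (fun p => p.2.2 = p.2.1)
    exact Finset.mem_filter.mpr
      ⟨mem_SS' (by omega) (by omega) (by omega) (by omega) (by omega), rfl⟩
  · rintro ⟨⟨a, b⟩, x, y⟩ hp
    obtain ⟨hp, hyx⟩ := Finset.mem_filter.mp hp
    obtain ⟨ha, hb, hx, hy, he⟩ := mem_SS_elim hp
    replace hyx : y = x := hyx
    have h2 : b * y = b * x := by rw [hyx]
    have hsum : (a + b) * x = N := by
      have h1 : (a + b) * x = a * x + b * x := by ring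
      omega
    have hdiv : N / x = a + b := Nat.div_eq_of_eq_mul_left hx hsum.symm
    show ((a, N / x - a), x, x) = ((a, b), x, y)
    have hb2 : N / x - a = b := by omega
    rw [hb2, hyx]
  · rintro ⟨d, a⟩ hq
    rfl
  · rintro ⟨⟨a, b⟩, x, y⟩ hp
    obtain ⟨hp, hyx⟩ := Finset.mem_filter.mp hp
    obtain ⟨ha, hb, hx, hy, he⟩ := mem_SS_elim hp
    replace hyx : y = x := hyx
    have h2 : b * y = b * x := by rw [hyx]
    have hsum : (a + b) * x = N := by
      have h1 : (a + b) * x = a * x + b * x := by ring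
      omega
    have hdiv : N / x = a + b := Nat.div_eq_of_eq_mul_left hx hsum.symm
    have hb2 : N / x - a = b := by omega
    show FF a b x y = FF a (N / x - a) x x
    rw [hb2, hyx]

lemma diag_ab_eq (N : ℕ) (hN : 0 < N) :
    ∑ p ∈ (SS N).filter (fun p => p.1.1 = p.1.2), FF p.1.1 p.1.2 p.2.1 p.2.2
      = ∑ q ∈ N.divisors.sigma (fun d => Finset.Icc 1 (N / d - 1)),
          FF q.1 q.1 q.2 (N / q.1 - q.2) := by
  apply Finset.sum_nbij' (i := fun p => ⟨p.1.1, p.2.1⟩)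
    (j := fun q => ((q.1, q.1), q.2, N / q.1 - q.2))
  · rintro ⟨⟨a, b⟩, x, y⟩ hp
    obtain ⟨hp, hab⟩ := Finset.mem_filter.mp hp
    obtain ⟨ha, hb, hx, hy, he⟩ := mem_SS_elim hp
    replace hab : a = b := hab
    have h2 : b * y = a * y := by rw [hab]
    have hsum : (x + y) * a = N := by
      have h1 : (x + y) * a = a * x + a * y := by ring
      omega
    have hdvd : a ∣ N := Dvd.intro_left _ hsum
    have hdiv : N / a = x + y := Nat.div_eq_of_eq_mul_left ha hsum.symm
    show (⟨a, x⟩ : (d : ℕ) × ℕ) ∈ N.divisors.sigma (fun d => Finset.Icc 1 (N / d - 1))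
    simp only [Finset.mem_sigma, Nat.mem_divisors, Finset.mem_Icc]
    exact ⟨⟨hdvd, by omega⟩, hx, by omega⟩
  · rintro ⟨d, x⟩ hq
    simp only [Finset.mem_sigma, Nat.mem_divisors, Finset.mem_Icc] at hq
    obtain ⟨⟨hdvd, hN0⟩, hx1, hx2⟩ := hq
    have hd1 : 1 ≤ d := by
      rcases Nat.eq_zero_or_pos d with h | h
      · exfalso; subst h; simp at hdvd; omega
      · exact h
    have hed : N / d * d = N := Nat.div_mul_cancel hdvd
    have hcomm : d * (N / d) = N / d * d := Nat.mul_comm _ _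
    have he2 : 2 ≤ N / d := by omega
    have hmul : d * x + d * (N / d - x) = d * (N / d) := by
      rw [← Nat.mul_add]
      congr 1
      omega
    have hdN : d ≤ N := Nat.le_of_dvd hN hdvd
    have heN : N / d ≤ N := Nat.div_le_self N d
    show ((d, d), x, N / d - x) ∈ (SS N).filter (fun p => p.1.1 = p.1.2)
    exact Finset.mem_filter.mpr
      ⟨mem_SS' (by omega) (by omega) (by omega) (by omega) (by omega), rfl⟩
  · rintro ⟨⟨a, b⟩, x, y⟩ hp
    obtain ⟨hp, hab⟩ := Finset.mem_filter.mp hp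
    obtain ⟨ha, hb, hx, hy, he⟩ := mem_SS_elim hp
    replace hab : a = b := hab
    have h2 : b * y = a * y := by rw [hab]
    have hsum : (x + y) * a = N := by
      have h1 : (x + y) * a = a * x + a * y := by ring
      omega
    have hdiv : N / a = x + y := Nat.div_eq_of_eq_mul_left ha hsum.symm
    show ((a, a), x, N / a - x) = ((a, b), x, y)
    have hy2 : N / a - x = y := by omega
    rw [hy2, hab]
  · rintro ⟨d, x⟩ hq
    rfl
  · rintro ⟨⟨a, b⟩, x, y⟩ hp
    obtain ⟨hp, hab⟩ := Finset.mem_filter.mp hp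
    obtain ⟨ha, hb, hx, hy, he⟩ := mem_SS_elim hp
    replace hab : a = b := hab
    have h2 : b * y = a * y := by rw [hab]
    have hsum : (x + y) * a = N := by
      have h1 : (x + y) * a = a * x + a * y := by ring
      omega
    have hdiv : N / a = x + y := Nat.div_eq_of_eq_mul_left ha hsum.symm
    have hy2 : N / a - x = y := by omega
    show FF a b x y = FF a a x (N / a - x)
    rw [hy2, hab]

lemma divisor_pointwise (n d : ℕ) (hd : d ∣ (2 * n + 1)) :
    ((2 * n + 1) / d : ℕ) ^ 2 * ((((d - 1) / 2 : ℕ) : ℤ)) + (((2 * n + 1) / d : ℕ) : ℤ) * ((((2 * n + 1) / d - 1) / 2 : ℕ) : ℤ)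
      = (n : ℤ) * (((2 * n + 1) / d : ℕ) : ℤ) := by
  set N := 2 * n + 1 with hN
  have hN2 : N % 2 = 1 := by omega
  have hd2 : d % 2 = 1 := odd_divisor hN2 hd
  have he2 : (N / d) % 2 = 1 := by
    obtain ⟨e, he⟩ := hd
    have : N / d = e := by
      rcases Nat.eq_zero_or_pos d with h | h
      · omega
      · exact Nat.div_eq_of_eq_mul_right h he
    rw [this]
    rcases Nat.even_or_odd e with ⟨t, rfl⟩ | h
    · exfalso
      have : d * (t + t) = d * t + d * t := by ring
      omega
    · obtain ⟨t, ht⟩ := h; omega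
  have hmul : N / d * d = N := Nat.div_mul_cancel hd
  have h1 : ((N / d : ℕ) : ℤ) * (d : ℤ) = 2 * (n : ℤ) + 1 := by exact_mod_cast hmul
  have hk : d = 2 * ((d - 1) / 2) + 1 := by omega
  have hl : N / d = 2 * ((N / d - 1) / 2) + 1 := by
    generalize N / d = t at he2 ⊢
    omega
  have h2 : (d : ℤ) = 2 * (((d - 1) / 2 : ℕ) : ℤ) + 1 := by exact_mod_cast hk
  have h3 : ((N / d : ℕ) : ℤ) = 2 * (((N / d - 1) / 2 : ℕ) : ℤ) + 1 := by exact_mod_cast hl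
  have doubled : 2 * (((N / d : ℕ) : ℤ) ^ 2 * ((((d - 1) / 2 : ℕ) : ℤ)) + ((N / d : ℕ) : ℤ) * ((((N / d - 1) / 2 : ℕ) : ℤ)))
      = 2 * ((n : ℤ) * ((N / d : ℕ) : ℤ)) := by
    linear_combination (((N / d : ℕ) : ℤ)) * h1 - (((N / d : ℕ) : ℤ))^2 * h2 - (((N / d : ℕ) : ℤ)) * h3
  push_cast at doubled ⊢
  linarith

lemma sum_W_eq (n : ℕ) (hn : 0 < n) :
    ∑ p ∈ SS (2 * n + 1), WW p.1.1 p.1.2 p.2.1 p.2.2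
      = (n : ℤ) * ∑ d ∈ (2 * n + 1).divisors, (d : ℤ) := by
  set N := 2 * n + 1 with hN
  have hN2 : N % 2 = 1 := by omega
  have hN0 : 0 < N := by omega
  rw [master N hN2, diag_xy_eq N hN0, diag_ab_eq N hN0]
  rw [Finset.sum_sigma, Finset.sum_sigma]
  have inner1 : ∀ d ∈ N.divisors,
      ∑ a ∈ Finset.Icc 1 (N / d - 1), FF a (N / d - a) d d
        = (d : ℤ) ^ 2 * (((N / d - 1) / 2 : ℕ) : ℤ) := by
    intro d hd
    obtain ⟨hdvd, hne⟩ := Nat.mem_divisors.mp hd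
    have hd2 : d % 2 = 1 := odd_divisor hN2 hdvd
    have he2 : (N / d) % 2 = 1 := by
      obtain ⟨e, he⟩ := hdvd
      have heq : N / d = e := Nat.div_eq_of_eq_mul_right (by omega) he
      rw [heq]
      exact odd_divisor hN2 ⟨d, by rw [he, Nat.mul_comm]⟩
    exact diag1_inner d (N / d) hd2 he2
  have inner2 : ∀ d ∈ N.divisors,
      ∑ x ∈ Finset.Icc 1 (N / d - 1), FF d d x (N / d - x)
        = -(((N / d : ℕ) : ℤ) * (((N / d - 1) / 2 : ℕ) : ℤ)) := by
    intro d hd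
    obtain ⟨hdvd, hne⟩ := Nat.mem_divisors.mp hd
    have hd2 : d % 2 = 1 := odd_divisor hN2 hdvd
    have he2 : (N / d) % 2 = 1 := by
      obtain ⟨e, he⟩ := hdvd
      have heq : N / d = e := Nat.div_eq_of_eq_mul_right (by omega) he
      rw [heq]
      exact odd_divisor hN2 ⟨d, by rw [he, Nat.mul_comm]⟩
    exact diag2_inner d (N / d) hd2 he2
  rw [Finset.sum_congr rfl inner1, Finset.sum_congr rfl inner2]
  have swap1 : ∑ d ∈ N.divisors, (d : ℤ) ^ 2 * (((N / d - 1) / 2 : ℕ) : ℤ)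
      = ∑ d ∈ N.divisors, (((N / d : ℕ) : ℤ) ^ 2 * (((d - 1) / 2 : ℕ) : ℤ)) := by
    rw [← Nat.sum_div_divisors N (fun d => ((N / d : ℕ) : ℤ) ^ 2 * (((d - 1) / 2 : ℕ) : ℤ))]
    apply Finset.sum_congr rfl
    intro d hd
    obtain ⟨hdvd, hne⟩ := Nat.mem_divisors.mp hd
    rw [Nat.div_div_self hdvd hne]
  rw [swap1, ← Finset.sum_sub_distrib]
  have point : ∀ d ∈ N.divisors,
      (((N / d : ℕ) : ℤ) ^ 2 * (((d - 1) / 2 : ℕ) : ℤ) - -(((N / d : ℕ) : ℤ) * (((N / d - 1) / 2 : ℕ) : ℤ)))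
        = (n : ℤ) * (((N / d : ℕ) : ℤ)) := by
    intro d hd
    obtain ⟨hdvd, hne⟩ := Nat.mem_divisors.mp hd
    have := divisor_pointwise n d hdvd
    rw [hN]
    push_cast at this ⊢
    linarith
  rw [Finset.sum_congr rfl point, ← Finset.mul_sum]
  congr 1
  exact Nat.sum_div_divisors N (fun d => (d : ℤ))

def sigN (m : ℕ) : ℤ := ∑ d ∈ m.divisors, (d : ℤ)

lemma sigma_unfold (M N k : ℕ) :
    ∑ q ∈ (Finset.Icc 1 M).sigma (fun m => m.divisors ×ˢ (N - k * m).divisors),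
        ((q.2.1 : ℤ) * (q.2.2 : ℤ))
      = ∑ m ∈ Finset.Icc 1 M, sigN m * sigN (N - k * m) := by
  rw [Finset.sum_sigma]
  apply Finset.sum_congr rfl
  intro m _
  rw [sigN, sigN, Finset.sum_mul_sum, Finset.sum_product]

lemma conv (N k : ℕ) (hk : 0 < k) :
    ∑ p ∈ (SS N).filter (fun p => k ∣ p.1.1), ((p.2.1 : ℤ) * (p.2.2 : ℤ))
      = ∑ m ∈ Finset.Icc 1 ((N - 1) / k), sigN m * sigN (N - k * m) := by
  rw [← sigma_unfold]
  apply Finset.sum_nbij' (i := fun p => ⟨(p.1.1 / k) * p.2.1, (p.2.1, p.2.2)⟩)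
    (j := fun q => ((k * (q.1 / q.2.1), (N - k * q.1) / q.2.2), q.2.1, q.2.2))
  · rintro ⟨⟨a, b⟩, x, y⟩ hp
    obtain ⟨hp, hdvd⟩ := Finset.mem_filter.mp hp
    obtain ⟨ha, hb, hx, hy, he⟩ := mem_SS_elim hp
    replace hdvd : k ∣ a := hdvd
    have hka : k * (a / k) = a := Nat.mul_div_cancel' hdvd
    have hkm : k * (a / k * x) = a * x := by
      rw [← Nat.mul_assoc, hka]
    have hby : 0 < b * y := Nat.mul_pos hb hy
    have hm1 : 1 ≤ a / k := Nat.div_pos (Nat.le_of_dvd (by omega) hdvd) hk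
    have hmM : a / k * x ≤ (N - 1) / k := by
      rw [Nat.le_div_iff_mul_le hk]
      have : a / k * x * k = k * (a / k * x) := by ring
      omega
    show (⟨a / k * x, (x, y)⟩ : (m : ℕ) × (ℕ × ℕ)) ∈ _
    simp only [Finset.mem_sigma, Finset.mem_Icc, Finset.mem_product, Nat.mem_divisors]
    refine ⟨⟨Nat.mul_pos hm1 hx, hmM⟩, ⟨Dvd.intro_left _ rfl, (Nat.mul_pos hm1 hx).ne'⟩, ⟨?_, ?_⟩⟩
    · have : N - k * (a / k * x) = b * y := by omega
      rw [this]
      exact Dvd.intro_left _ rfl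
    · omega
  · rintro ⟨m, x, y⟩ hq
    simp only [Finset.mem_sigma, Finset.mem_Icc, Finset.mem_product, Nat.mem_divisors] at hq
    obtain ⟨⟨hm1, hmM⟩, ⟨hxm, hm0⟩, hyr, hr0⟩ := hq
    have hx1 : 0 < x := Nat.pos_of_dvd_of_pos hxm (by omega)
    have hy1 : 0 < y := Nat.pos_of_dvd_of_pos hyr (by omega)
    have hax : k * (m / x) * x = k * m := by
      rw [Nat.mul_assoc, Nat.div_mul_cancel hxm]
    have hby : (N - k * m) / y * y = N - k * m := Nat.div_mul_cancel hyr
    have hkmN : k * m ≤ N - 1 := by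
      have h1 : m * k ≤ (N - 1) / k * k := Nat.mul_le_mul_right k hmM
      have h2 : (N - 1) / k * k ≤ N - 1 := Nat.div_mul_le_self _ _
      omega
    have hmx : 1 ≤ m / x := Nat.div_pos (Nat.le_of_dvd (by omega) hxm) hx1
    have hxN : x ≤ m := Nat.le_of_dvd (by omega) hxm
    have hyN : y ≤ N - k * m := Nat.le_of_dvd (by omega) hyr
    have hbN : (N - k * m) / y ≤ N - k * m := Nat.div_le_self _ _
    have hb1 : 1 ≤ (N - k * m) / y := Nat.div_pos (Nat.le_of_dvd (by omega) hyr) hy1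
    have ha1 : 0 < k * (m / x) := Nat.mul_pos hk hmx
    have haN : k * (m / x) ≤ k * (m / x) * x := Nat.le_mul_of_pos_right _ hx1
    have hMN : (N - 1) / k ≤ N - 1 := Nat.div_le_self _ _
    show ((k * (m / x), (N - k * m) / y), x, y) ∈ _
    refine Finset.mem_filter.mpr ⟨mem_SS' ?_ ?_ ?_ ?_ ?_, ?_⟩
    · omega
    · omega
    · omega
    · omega
    · omega
    · exact Dvd.intro _ rfl
  · rintro ⟨⟨a, b⟩, x, y⟩ hp
    obtain ⟨hp, hdvd⟩ := Finset.mem_filter.mp hp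
    obtain ⟨ha, hb, hx, hy, he⟩ := mem_SS_elim hp
    replace hdvd : k ∣ a := hdvd
    have hka : k * (a / k) = a := Nat.mul_div_cancel' hdvd
    have e1 : a / k * x / x = a / k := Nat.mul_div_cancel _ hx
    have hkm : k * (a / k * x) = a * x := by rw [← Nat.mul_assoc, hka]
    have e2 : N - k * (a / k * x) = b * y := by omega
    show ((k * (a / k * x / x), (N - k * (a / k * x)) / y), x, y) = ((a, b), x, y)
    rw [e1, hka, e2, Nat.mul_div_cancel _ hy]
  · rintro ⟨m, x, y⟩ hq
    simp only [Finset.mem_sigma, Finset.mem_Icc, Finset.mem_product, Nat.mem_divisors] at hq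
    obtain ⟨⟨hm1, hmM⟩, ⟨hxm, hm0⟩, hyr, hr0⟩ := hq
    have hx1 : 0 < x := Nat.pos_of_dvd_of_pos hxm (by omega)
    show (⟨k * (m / x) / k * x, (x, y)⟩ : (m : ℕ) × (ℕ × ℕ)) = ⟨m, (x, y)⟩
    rw [Nat.mul_div_cancel_left _ hk, Nat.div_mul_cancel hxm]
  · rintro ⟨⟨a, b⟩, x, y⟩ hp
    rfl


lemma sigmaZ_coe (m : ℕ) : sigmaZ (m : ℤ) = sigN m := by
  simp [sigmaZ, sigN]

lemma sigmaZ_nonpos {z : ℤ} (hz : z ≤ 0) : sigmaZ z = 0 := by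
  have h : z.toNat = 0 := Int.toNat_eq_zero.mpr hz
  rw [sigmaZ, h]
  simp

lemma sigmaHalf_coe (m : ℕ) : sigmaHalf (m : ℤ) = if 2 ∣ m then sigN (m / 2) else 0 := by
  rw [sigmaHalf]
  by_cases h : 2 ∣ m
  · have h' : (2 : ℤ) ∣ (m : ℤ) := by exact_mod_cast Int.natCast_dvd_natCast.mpr h
    rw [if_pos h', if_pos h]
    have hc : ((m : ℤ)) / 2 = ((m / 2 : ℕ) : ℤ) := by omega
    rw [hc, sigmaZ_coe]
  · have h' : ¬ (2 : ℤ) ∣ (m : ℤ) := by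
      intro hc
      exact h (by exact_mod_cast Int.natCast_dvd_natCast.mp hc)
    rw [if_neg h', if_neg h]

lemma W_split (N : ℕ) :
    ∑ p ∈ SS N, WW p.1.1 p.1.2 p.2.1 p.2.2
      = 4 * (∑ p ∈ (SS N).filter (fun p => 2 ∣ p.1.1), ((p.2.1 : ℤ) * (p.2.2 : ℤ)))
        - 16 * (∑ p ∈ (SS N).filter (fun p => 4 ∣ p.1.1), ((p.2.1 : ℤ) * (p.2.2 : ℤ))) := by
  have point : ∀ p ∈ SS N, WW p.1.1 p.1.2 p.2.1 p.2.2
      = (if 2 ∣ p.1.1 then 4 * ((p.2.1 : ℤ) * (p.2.2 : ℤ)) else 0)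
        + (if 4 ∣ p.1.1 then (-16) * ((p.2.1 : ℤ) * (p.2.2 : ℤ)) else 0) := by
    rintro ⟨⟨a, b⟩, x, y⟩ _
    show WW a b x y = _
    have h4 : a % 4 = 0 ∨ a % 4 = 1 ∨ a % 4 = 2 ∨ a % 4 = 3 := by omega
    rcases h4 with h | h | h | h
    · have d2 : 2 ∣ a := by omega
      have d4 : 4 ∣ a := by omega
      simp only [WW, liouC, h, if_pos d2, if_pos d4]
      norm_num
      ring
    · have d2 : ¬ 2 ∣ a := by omega
      have d4 : ¬ 4 ∣ a := by omega
      simp only [WW, liouC, h, if_neg d2, if_neg d4]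
      norm_num
    · have d2 : 2 ∣ a := by omega
      have d4 : ¬ 4 ∣ a := by omega
      simp only [WW, liouC, h, if_pos d2, if_neg d4]
      norm_num
    · have d2 : ¬ 2 ∣ a := by omega
      have d4 : ¬ 4 ∣ a := by omega
      simp only [WW, liouC, h, if_neg d2, if_neg d4]
      norm_num
  rw [Finset.sum_congr rfl point, Finset.sum_add_distrib, ← Finset.sum_filter, ← Finset.sum_filter,
    Finset.mul_sum, Finset.mul_sum]
  have e : ∑ a ∈ (SS N).filter (fun p => 4 ∣ p.1.1), (-16 : ℤ) * ((a.2.1 : ℤ) * (a.2.2 : ℤ))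
      = - ∑ a ∈ (SS N).filter (fun p => 4 ∣ p.1.1), (16 : ℤ) * ((a.2.1 : ℤ) * (a.2.2 : ℤ)) := by
    rw [← Finset.sum_neg_distrib]
    apply Finset.sum_congr rfl
    intro a _
    ring
  rw [e]
  ring

lemma half_reindex (n : ℕ) :
    ∑ j ∈ Finset.Icc 1 n, (if 2 ∣ j then sigN (j / 2) else 0) * sigN (2 * n + 1 - 2 * j)
      = ∑ m ∈ Finset.Icc 1 (n / 2), sigN m * sigN (2 * n + 1 - 4 * m) := by
  have step : ∀ j ∈ Finset.Icc 1 n,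
      (if 2 ∣ j then sigN (j / 2) else 0) * sigN (2 * n + 1 - 2 * j)
        = if 2 ∣ j then sigN (j / 2) * sigN (2 * n + 1 - 2 * j) else 0 := by
    intro j _
    split <;> simp
  rw [Finset.sum_congr rfl step, ← Finset.sum_filter]
  apply Finset.sum_nbij' (i := fun j => j / 2) (j := fun m => 2 * m)
  · intro j hj
    simp only [Finset.mem_filter, Finset.mem_Icc] at hj ⊢
    omega
  · intro m hm
    simp only [Finset.mem_filter, Finset.mem_Icc] at hm ⊢
    omega
  · intro j hj
    simp only [Finset.mem_filter, Finset.mem_Icc] at hj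
    omega
  · intro m hm
    simp only [Finset.mem_filter, Finset.mem_Icc] at hm
    omega
  · intro j hj
    simp only [Finset.mem_filter, Finset.mem_Icc] at hj
    have h1 : 2 * n + 1 - 2 * j = 2 * n + 1 - 4 * (j / 2) := by omega
    rw [h1]

theorem sigma_recurrence_three (n : ℕ) (hn : 0 < n) :
    (n : ℤ) * sigmaZ (2 * (n : ℤ) + 1) =
      4 * ∑ᶠ j ∈ Set.Ici (1 : ℕ),
        (sigmaZ (j : ℤ) - 4 * sigmaHalf (j : ℤ)) *
          sigmaZ (2 * (n : ℤ) + 1 - 2 * (j : ℤ)) := by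
  have hfin : ∑ᶠ j ∈ Set.Ici (1 : ℕ),
      (sigmaZ (j : ℤ) - 4 * sigmaHalf (j : ℤ)) * sigmaZ (2 * (n : ℤ) + 1 - 2 * (j : ℤ))
      = ∑ j ∈ Finset.Icc 1 n,
          (sigmaZ (j : ℤ) - 4 * sigmaHalf (j : ℤ)) * sigmaZ (2 * (n : ℤ) + 1 - 2 * (j : ℤ)) := by
    apply finsum_mem_eq_sum_of_inter_support_eq
    ext j
    simp only [Set.mem_inter_iff, Set.mem_Ici, Function.mem_support, Finset.coe_Icc, Set.mem_Icc]
    constructor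
    · rintro ⟨h1, h2⟩
      refine ⟨⟨h1, ?_⟩, h2⟩
      by_contra hgt
      apply h2
      have hz : sigmaZ (2 * (n : ℤ) + 1 - 2 * (j : ℤ)) = 0 := sigmaZ_nonpos (by push_cast; omega)
      rw [hz, mul_zero]
    · rintro ⟨⟨h1, _⟩, h2⟩
      exact ⟨h1, h2⟩
  rw [hfin]
  have hconv : ∀ j ∈ Finset.Icc 1 n,
      (sigmaZ (j : ℤ) - 4 * sigmaHalf (j : ℤ)) * sigmaZ (2 * (n : ℤ) + 1 - 2 * (j : ℤ))
        = (sigN j - 4 * (if 2 ∣ j then sigN (j / 2) else 0)) * sigN (2 * n + 1 - 2 * j) := by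
    intro j hj
    simp only [Finset.mem_Icc] at hj
    have hcast : (2 * (n : ℤ) + 1 - 2 * (j : ℤ)) = ((2 * n + 1 - 2 * j : ℕ) : ℤ) := by
      push_cast
      omega
    rw [sigmaZ_coe, sigmaHalf_coe, hcast, sigmaZ_coe]
  rw [Finset.sum_congr rfl hconv]
  have expand : ∑ j ∈ Finset.Icc 1 n,
      (sigN j - 4 * (if 2 ∣ j then sigN (j / 2) else 0)) * sigN (2 * n + 1 - 2 * j)
      = (∑ j ∈ Finset.Icc 1 n, sigN j * sigN (2 * n + 1 - 2 * j))
        - 4 * ∑ j ∈ Finset.Icc 1 n,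
            (if 2 ∣ j then sigN (j / 2) else 0) * sigN (2 * n + 1 - 2 * j) := by
    rw [Finset.mul_sum, ← Finset.sum_sub_distrib]
    apply Finset.sum_congr rfl
    intro j _
    ring
  rw [expand, half_reindex]
  have hc2 := conv (2 * n + 1) 2 (by omega)
  have hc4 := conv (2 * n + 1) 4 (by omega)
  have hM2 : (2 * n + 1 - 1) / 2 = n := by omega
  have hM4 : (2 * n + 1 - 1) / 4 = n / 2 := by omega
  rw [hM2] at hc2
  rw [hM4] at hc4
  have hW := sum_W_eq n hn
  have hsplit := W_split (2 * n + 1)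
  have hsig : sigmaZ (2 * (n : ℤ) + 1) = sigN (2 * n + 1) := by
    have h : (2 * (n : ℤ) + 1) = ((2 * n + 1 : ℕ) : ℤ) := by push_cast; ring
    rw [h, sigmaZ_coe]
  rw [hsig, ← hc2, ← hc4]
  have hsigN : sigN (2 * n + 1) = ∑ d ∈ (2 * n + 1).divisors, (d : ℤ) := rfl
  rw [hsigN]
  linarith [hW, hsplit]
end
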